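/- Let X be an Irr-continuous and sup-sober T₀-space. Then the relation ≪_Irr has the interpolation property: whenever z ≪_Irr x, there exists y ∈ X with z ≪_Irr y ≪_Irr x. -/

import Mathlib

universe u v w

open Set

/-- A preordered index type is a (nonempty) directed index set for nets. -/
def IsDirIdx (I : Type v) [Preorder I] : Prop :=
  Nonempty I ∧ ∀ i j : I, ∃ k, i ≤ k ∧ j ≤ k

/-- Convergence of a net with respect to a topology `t` on `X`. -/
def NetConv {X : Type u} (t : TopologicalSpace X) {I : Type v} [Preorder I]
    (net : I → X) (x : X) : Prop :=
  ∀ U : Set X, t.IsOpen U → x ∈ U → ∃ k, ∀ i, k ≤ i → net i ∈ U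

section
variable {X : Type u} [TopologicalSpace X]

/-- The specialisation order: `x ≤ y` iff `x ∈ cl {y}`. -/
def sLE (x y : X) : Prop := x ∈ closure ({y} : Set X)

/-- `b` is an upper bound of `A` in the specialisation order. -/
def IsUB (A : Set X) (b : X) : Prop := ∀ a ∈ A, sLE a b

/-- `s` is the supremum (least upper bound) of `A` in the specialisation order. -/
def IsSupSpec (A : Set X) (s : X) : Prop := IsUB A s ∧ ∀ b, IsUB A b → sLE s b

/-- The upper set `↑x` in the specialisation order. -/
def upS (x : X) : Set X := {u | sLE x u}

/-- The lower set `↓A` in the specialisation order. -/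
def downS (A : Set X) : Set X := {u | ∃ a ∈ A, sLE u a}

/-- The Irr-way-below relation: `x ≪_Irr y` iff every irreducible set `E`
whose supremum exists and dominates `y` meets `↑x`. -/
def wbIrr (x y : X) : Prop :=
  ∀ E : Set X, IsIrreducible E → ∀ s : X, IsSupSpec E s → sLE y s → (E ∩ upS x).Nonempty

/-- `↡x = {u | u ≪_Irr x}`. -/
def ddIrr (x : X) : Set X := {u | wbIrr u x}

/-- `↟x = {u | x ≪_Irr u}`. -/
def uuIrr (x : X) : Set X := {u | wbIrr x u}

/-- A directed subset (w.r.t. the specialisation order): nonempty and every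
pair of elements has an upper bound in the set. -/
def DirectedSub (D : Set X) : Prop :=
  D.Nonempty ∧ ∀ a ∈ D, ∀ b ∈ D, ∃ c ∈ D, sLE a c ∧ sLE b c

/-- `e` is an eventual lower bound of the net `net`. -/
def EvLB {I : Type v} [Preorder I] (net : I → X) (e : X) : Prop :=
  ∃ k, ∀ i, k ≤ i → sLE e (net i)

/-- Irr-convergence: the net `net` Irr-converges to `y` iff there is an
irreducible set `E` with a supremum `≥ y` consisting of eventual lower
bounds of the net. -/
def IrrConv {I : Type v} [Preorder I] (net : I → X) (y : X) : Prop :=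
  ∃ E : Set X, IsIrreducible E ∧ (∃ s, IsSupSpec E s ∧ sLE y s) ∧ ∀ e ∈ E, EvLB net e

end

/-- Sup-sobriety: every closed irreducible set having a supremum is the
closure of the singleton of its supremum. -/
def SupSober (X : Type u) [TopologicalSpace X] : Prop :=
  ∀ F : Set X, IsClosed F → IsIrreducible F → ∀ s : X, IsSupSpec F s → F = closure {s}

/-- `U` is open in the irreducibly-derived topology `τ_SI`. -/
def SIOpen {X : Type u} [TopologicalSpace X] (U : Set X) : Prop :=
  IsOpen U ∧ ∀ E : Set X, IsIrreducible E → ∀ s : X, IsSupSpec E s → s ∈ U →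
    (E ∩ U).Nonempty

/-- Interior with respect to the irreducibly-derived topology. -/
def SIint {X : Type u} [TopologicalSpace X] (A : Set X) : Set X :=
  ⋃₀ {U : Set X | SIOpen U ∧ U ⊆ A}

/-- Irr-continuity: every `↡x` is irreducible with supremum `x`. -/
def IrrCont (X : Type u) [TopologicalSpace X] : Prop :=
  ∀ x : X, IsIrreducible (ddIrr x) ∧ IsSupSpec (ddIrr x) x

/-- SI⁻-continuity: every `↡x` contains a directed subset with supremum `x`. -/
def SImCont (X : Type u) [TopologicalSpace X] : Prop :=
  ∀ x : X, ∃ D : Set X, D ⊆ ddIrr x ∧ DirectedSub D ∧ IsSupSpec D x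

/-- The `*`-property: for every irreducible `F` with a supremum there is a
directed subset of `↓F` with the same supremum. -/
def StarProp (X : Type u) [TopologicalSpace X] : Prop :=
  ∀ F : Set X, IsIrreducible F → ∀ s : X, IsSupSpec F s →
    ∃ D : Set X, D ⊆ downS F ∧ DirectedSub D ∧ IsSupSpec D s

/-- The `⊕`-property: every `↟x` is open. -/
def OplusProp (X : Type u) [TopologicalSpace X] : Prop :=
  ∀ x : X, IsOpen (uuIrr x)

/-- C-space: for every open `U` and `x ∈ U` there is `y ∈ U` with
`x ∈ int (↑y)`. -/
def CSpace (X : Type u) [TopologicalSpace X] : Prop :=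
  ∀ U : Set X, IsOpen U → ∀ x ∈ U, ∃ y ∈ U, x ∈ interior (upS y)

/-- The Irr-convergence class is topological: some topology induces it. -/
def IrrTopological (X : Type u) [TopologicalSpace X] : Prop :=
  ∃ t : TopologicalSpace X, ∀ (I : Type u) [Preorder I], IsDirIdx I →
    ∀ (net : I → X) (y : X), IrrConv net y ↔ NetConv t net y

/-- The family `τ_𝓘` of sets induced by the Irr-convergence class. -/
def tauI (X : Type u) [TopologicalSpace X] : Set (Set X) :=
  {U | ∀ (I : Type u) [Preorder I], IsDirIdx I → ∀ (net : I → X) (y : X),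
      IrrConv net y → y ∈ U → ∃ k, ∀ i, k ≤ i → net i ∈ U}

/-- Kelley's (Iterated limits) axiom for the Irr-convergence class. -/
def IterLimAxiom (X : Type u) [TopologicalSpace X] : Prop :=
  ∀ (I : Type u) [Preorder I], IsDirIdx I →
    ∀ (J : I → Type u) [∀ i, Preorder (J i)], (∀ i, IsDirIdx (J i)) →
      ∀ (xi : I → X) (xx : ∀ i, J i → X) (x : X),
        IrrConv xi x → (∀ i, IrrConv (xx i) (xi i)) →
        IrrConv (fun p : I × (∀ i, J i) => xx p.1 (p.2 p.1)) x

lemma sLE_refl' {X : Type u} [TopologicalSpace X] (a : X) : sLE a a := subset_closure rfl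

lemma sLE_trans' {X : Type u} [TopologicalSpace X] {a b c : X} (h1 : sLE a b) (h2 : sLE b c) :
    sLE a c := by
  have : closure ({b} : Set X) ⊆ closure {c} :=
    closure_minimal (by simpa [sLE] using h2) isClosed_closure
  exact this h1

lemma wbIrr_le' {X : Type u} [TopologicalSpace X] {w u : X} (h : wbIrr w u) : sLE w u := by
  have hsup : IsSupSpec ({u} : Set X) u :=
    ⟨fun a ha => by rw [Set.mem_singleton_iff] at ha; rw [ha]; exact sLE_refl' _, fun b hb => hb u rfl⟩
  obtain ⟨v, hv, hv2⟩ := h {u} isIrreducible_singleton u hsup (sLE_refl' u)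
  rw [Set.mem_singleton_iff] at hv; rw [← hv]; exact hv2

lemma IsSupSpec.closure' {X : Type u} [TopologicalSpace X] {A : Set X} {s : X}
    (h : IsSupSpec A s) : IsSupSpec (closure A) s := by
  constructor
  · intro a ha
    have : A ⊆ closure ({s} : Set X) := fun b hb => h.1 b hb
    exact closure_minimal this isClosed_closure ha
  · intro b hb
    exact h.2 b fun a ha => hb a (subset_closure ha)

/-- interpolation in Irr-continuous sup-sober spaces. -/
theorem wbIrr_interpolation_of_irrCont {X : Type u} [TopologicalSpace X] [T0Space X]
    (hX : IrrCont X) (hs : SupSober X) (z x : X) (hzx : wbIrr z x) :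
    ∃ y : X, wbIrr z y ∧ wbIrr y x := by
  classical
  set E : Set X := {w | ∃ u, u ∈ ddIrr x ∧ w ∈ ddIrr u} with hE
  -- closure E = closure (ddIrr x)
  have hsub1 : E ⊆ closure (ddIrr x) := by
    rintro w ⟨u, hu, hw⟩
    have hwu : sLE w u := wbIrr_le' hw
    have h1 : closure ({u} : Set X) ⊆ closure (ddIrr x) :=
      closure_minimal (Set.singleton_subset_iff.2 (subset_closure hu)) isClosed_closure
    exact h1 hwu
  have hsub2 : ddIrr x ⊆ closure E := by
    intro u hu
    obtain ⟨hIrr, hSup⟩ := hX u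
    have hclo := hs (closure (ddIrr u)) isClosed_closure hIrr.closure u hSup.closure'
    have hmem : u ∈ closure (ddIrr u) := by
      rw [hclo]; exact subset_closure rfl
    have : closure (ddIrr u) ⊆ closure E :=
      closure_minimal (fun w hw => subset_closure ⟨u, hu, hw⟩) isClosed_closure
    exact this hmem
  have hclEq : closure E = closure (ddIrr x) := by
    apply Subset.antisymm (closure_minimal hsub1 isClosed_closure)
    exact closure_minimal (hsub2.trans (closure_mono (fun w hw => hw))) isClosed_closure
  -- E is irreducible
  have hEirr : IsIrreducible E := by
    rw [← isIrreducible_iff_closure, hclEq, isIrreducible_iff_closure]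
    exact (hX x).1
  -- x is the supremum of E
  have hEsup : IsSupSpec E x := by
    constructor
    · rintro w ⟨u, hu, hw⟩
      exact sLE_trans' (wbIrr_le' hw) (wbIrr_le' hu)
    · intro b hb
      apply (hX x).2.2 b
      intro u hu
      apply ((hX u).2.2 b)
      intro w hw
      exact hb w ⟨u, hu, hw⟩
  obtain ⟨w, ⟨u, hu, hw⟩, hzw⟩ := hzx E hEirr x hEsup (sLE_refl' x)
  refine ⟨u, ?_, hu⟩
  intro F hF s hsF hus
  obtain ⟨v, hv, hwv⟩ := hw F hF s hsF hus
  exact ⟨v, hv, sLE_trans' hzw hwv⟩
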